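/- For every ũ ∈ Ũ₀, the map (a,b) ↦ λ(a,b), from pairs of nonnegative-integer vectors indexed by the h-positions and v-positions of ũ to compositions, is injective, and its image is exactly {λ ∈ GK_ũ : λ ≥ λ_ũ}. -/

import Mathlib

open scoped ENNReal NNReal

namespace GK

/-! ## The Gnedin–Kingman graph -/

/-- Decrement (if the part is ≥ 2) or delete (otherwise) the part of `μ` at position `p`. -/
def stepAt (μ : List ℕ) (p : ℕ) : List ℕ :=
  if 2 ≤ μ.getD p 0 then μ.set p (μ.getD p 0 - 1) else μ.eraseIdx p

/-- Edge multiplicity `κ(ν,μ)` of the Gnedin–Kingman graph: the number of positions of `μ`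
at which decrementing a part ≥ 2 (or deleting a part equal to 1) produces `ν`. -/
def kappa (ν μ : List ℕ) : ℕ :=
  ((Finset.range μ.length).filter fun p => stepAt μ p = ν).card

/-- `ν ↗ μ`. -/
def Rel (ν μ : List ℕ) : Prop := 0 < kappa ν μ

def IsComposition (l : List ℕ) : Prop := ∀ n ∈ l, 0 < n

/-- Compositions: finite lists of positive integers. -/
abbrev Comp := {l : List ℕ // IsComposition l}

/-- The empty composition ∅. -/
def cEmpty : Comp := ⟨[], fun _ h => nomatch h⟩

/-- Harmonicity, for `[0,∞]`-valued functions on the Gnedin–Kingman graph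
(with the conventions `0·∞ = 0` and `x + ∞ = ∞` of `ℝ≥0∞`). -/
def HarmonicE (φ : Comp → ℝ≥0∞) : Prop :=
  ∀ l : Comp, φ l = ∑' μ : Comp, (kappa l.1 μ.1 : ℝ≥0∞) * φ μ

/-- Harmonicity, for real-valued functions. -/
def HarmonicR (φ : Comp → ℝ) : Prop :=
  ∀ l : Comp, φ l = ∑' μ : Comp, (kappa l.1 μ.1 : ℝ) * φ μ

/-- A finite harmonic function: real-valued (hence finite), nonnegative, harmonic. -/
def FiniteHarmonic (φ : Comp → ℝ) : Prop :=
  HarmonicR φ ∧ ∀ l, 0 ≤ φ l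

/-- The quasi-shuffle coefficient `c^γ_{α,β}`: the number of pairs of strictly increasing
maps `f, g` into the positions of `γ` which jointly cover all positions of `γ` and such that
each part of `γ` is the sum of the corresponding parts of `α` and `β`. -/
noncomputable def qsCoeff (α β γ : List ℕ) : ℕ :=
  Nat.card {fg : (Fin α.length → Fin γ.length) × (Fin β.length → Fin γ.length) //
    StrictMono fg.1 ∧ StrictMono fg.2 ∧
    (∀ s, (∃ i, fg.1 i = s) ∨ (∃ j, fg.2 j = s)) ∧
    ∀ s : Fin γ.length,
      γ.get s = (∑ i, if fg.1 i = s then α.get i else 0) +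
                (∑ j, if fg.2 j = s then β.get j else 0)}

/-- Indecomposability of a finite harmonic function normalized at ∅. -/
def IndecFin (φ : Comp → ℝ) : Prop :=
  ∀ φ₁ φ₂ : Comp → ℝ, FiniteHarmonic φ₁ → FiniteHarmonic φ₂ →
    φ₁ cEmpty = 1 → φ₂ cEmpty = 1 →
    ∀ c₁ c₂ : ℝ, 0 < c₁ → 0 < c₂ → c₁ + c₂ = 1 →
      (∀ l, φ l = c₁ * φ₁ l + c₂ * φ₂ l) → φ = φ₁ ∨ φ = φ₂

/-! ## Typed weight sequences, `M°_λ` and `U₀` -/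

/-- `M°_λ(v)` for a typed weight sequence `v` (`true` = h, `false` = v): the sum over all
decompositions of `λ` into consecutive (possibly empty) blocks, one for each entry of `v`,
where an h-block has at most one part and contributes `w^{|block|}`, and a v-block has all
parts equal to 1 and contributes `w^{ℓ}/ℓ!`. -/
noncomputable def Mcirc : List (ℝ × Bool) → List ℕ → ℝ
  | [], l => if l = [] then 1 else 0
  | (w, t) :: v, l =>
      ∑ i ∈ Finset.range (l.length + 1),
        (if t then (if (l.take i).length ≤ 1 then w ^ (l.take i).sum else 0)
         else if ∀ n ∈ l.take i, n = 1 then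
           w ^ (l.take i).length / ((l.take i).length.factorial : ℝ)
         else 0) * Mcirc v (l.drop i)

/-- Membership in `U₀`: positive weights of total sum 1, no two consecutive v's. -/
def memU0 (u : List (ℝ × Bool)) : Prop :=
  (∀ p ∈ u, 0 < p.1) ∧ (u.map Prod.fst).sum = 1 ∧
    List.Chain' (fun p q => p.2 = true ∨ q.2 = true) u

/-- `t_n(u)`: replace each h-interval by a part `n` and each v-interval by `n` ones. -/
def tnU (u : List (ℝ × Bool)) (n : ℕ) : List ℕ :=
  (u.map fun p => if p.2 then [n] else List.replicate n 1).flatten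

/-- Merge each maximal run of consecutive v-intervals into a single v-interval,
summing the weights. -/
def mergeV : List (ℝ × Bool) → List (ℝ × Bool)
  | [] => []
  | (w, true) :: rest => (w, true) :: mergeV rest
  | (w, false) :: rest =>
      match mergeV rest with
      | (w', false) :: rest' => (w + w', false) :: rest'
      | r => (w, false) :: r

/-! ## The set `Ũ₀` and the functions `φ_ũ` -/

/-- An element of `Ũ₀`. `t i = true` means type h, `false` means type v; `sep i` are the
separating compositions λ₀, …, λ_m. Only `w i`, `t i` for `i < m` and `sep i` for `i ≤ m`
are relevant. -/
structure UTilde where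
  m : ℕ
  w : ℕ → ℝ
  t : ℕ → Bool
  sep : ℕ → List ℕ
  sep_pos : ∀ i, i ≤ m → ∀ n ∈ sep i, 0 < n
  sep_nonempty : ∃ i, i ≤ m ∧ sep i ≠ []
  w_pos : ∀ i, i < m → 0 < w i
  w_sum : ∑ i ∈ Finset.range m, w i = 1
  vv : ∀ i, i + 1 < m → t i = false → t (i + 1) = false → sep (i + 1) ≠ []
  v_left : ∀ i, i < m → t i = false → sep i ≠ [] → 2 ≤ (sep i).getLastD 0
  v_right : ∀ i, i < m → t i = false → sep (i + 1) ≠ [] → 2 ≤ (sep (i + 1)).headD 0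

namespace UTilde

variable (u : UTilde)

/-- `λ₀ ⊔ f 0 ⊔ λ₁ ⊔ … ⊔ f (m-1) ⊔ λ_m`. -/
def blocks (f : ℕ → List ℕ) : List ℕ :=
  u.sep 0 ++ (List.ofFn fun i : Fin u.m => f (i : ℕ) ++ u.sep ((i : ℕ) + 1)).flatten

/-- `t_n(ũ)`. -/
def tn (n : ℕ) : List ℕ :=
  u.blocks fun i => if u.t i then [n] else List.replicate n 1

/-- Membership in `GK_ũ`. -/
def GKmem (l : List ℕ) : Prop := ∃ n, 1 ≤ n ∧ Relation.ReflTransGen Rel l (u.tn n)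

/-- Position `i` (of type h) is adjacent to a v-interval. -/
def adj (i : ℕ) : Prop :=
  (0 < i ∧ u.t (i - 1) = false ∧ u.sep i = []) ∨
  (i + 1 < u.m ∧ u.t (i + 1) = false ∧ u.sep (i + 1) = [])

instance (i : ℕ) : Decidable (u.adj i) := by unfold adj; infer_instance

def d (i : ℕ) : ℕ := if u.adj i then 2 else 1

/-- `λ(a,b)`, where `c` encodes both vectors: `a i = c i` on h-positions and
`b i = c i` on v-positions. -/
def lam (c : ℕ → ℕ) : List ℕ :=
  u.blocks fun i => if u.t i then [u.d i + c i] else List.replicate (c i) 1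

/-- `λ_ũ = λ(0,0)`. -/
def lam0 : List ℕ := u.lam fun _ => 0

/-- `Π_{i : t_i = h} w_i^{a_i} · Π_{i : t_i = v} w_i^{b_i}/b_i!`. -/
noncomputable def phiVal (c : ℕ → ℕ) : ℝ≥0∞ :=
  ∏ i ∈ Finset.range u.m,
    if u.t i then ENNReal.ofReal (u.w i) ^ c i
    else ENNReal.ofReal (u.w i) ^ c i / ((c i).factorial : ℝ≥0∞)

open Classical in
/-- The semifinite harmonic function `φ_ũ`. -/
noncomputable def phi (l : List ℕ) : ℝ≥0∞ :=
  if h : ∃ c : ℕ → ℕ, l = u.lam c then u.phiVal h.choose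
  else if u.GKmem l then ⊤ else 0

/-- `u^ε(ũ)`: each part of each separating composition is replaced by an h-interval
of length `ε`. -/
def uEps (ε : ℝ) : List (ℝ × Bool) :=
  ((u.sep 0).map fun _ => (ε, true)) ++
    (List.ofFn fun i : Fin u.m =>
      (u.w (i : ℕ), u.t (i : ℕ)) :: ((u.sep ((i : ℕ) + 1)).map fun _ => (ε, true))).flatten

/-- `n(ũ) = |λ₀| + … + |λ_m|`. -/
def nU : ℕ := ∑ i ∈ Finset.range (u.m + 1), (u.sep i).sum

/-- The list of intervals of `ũ` (separating compositions dropped). -/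
def ubarList : List (ℝ × Bool) := List.ofFn fun i : Fin u.m => (u.w (i : ℕ), u.t (i : ℕ))

end UTilde

/-! ## The cone `K` and the maps `F_φ` -/

/-- `V`: finitely supported real functions on compositions. -/
abbrev V := Comp →₀ ℝ

/-- `W`: span of the vectors `e_λ − Σ_μ κ(λ,μ)·e_μ`. -/
noncomputable def Wsub : Submodule ℝ V :=
  Submodule.span ℝ
    {x : V | ∃ l : Comp, ∀ μ : Comp, x μ = (if μ = l then 1 else 0) - (kappa l.1 μ.1 : ℝ)}

/-- `R = V/W`. -/
abbrev Rq := V ⧸ Wsub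

/-- The cone `K ⊆ R`: classes of nonnegative vectors. -/
def Kcone : Set Rq :=
  {a | ∃ x : V, (∀ μ, 0 ≤ x μ) ∧ Submodule.Quotient.mk x = a}

/-- `Σ_λ x(λ)·φ(λ)` for a representative `x`. -/
noncomputable def FphiV (φ : Comp → ℝ≥0∞) (x : V) : ℝ≥0∞ :=
  ∑' μ : Comp, ENNReal.ofReal (x μ) * φ μ

open Classical in
/-- `F_φ : K → [0,∞]` (defined via a choice of nonnegative representative; for harmonic `φ`
it is well defined). Outside `K` we set it to `0`. -/
noncomputable def Fphi (φ : Comp → ℝ≥0∞) (a : Rq) : ℝ≥0∞ :=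
  if h : a ∈ Kcone then FphiV φ h.choose else 0

/-- Semifiniteness: not finite, and `F_φ` is determined by its finite values from below. -/
def Semifinite (φ : Comp → ℝ≥0∞) : Prop :=
  (¬ ∀ l, φ l < ⊤) ∧
    ∀ a ∈ Kcone, Fphi φ a =
      sSup {y | ∃ b ∈ Kcone, a - b ∈ Kcone ∧ Fphi φ b < ⊤ ∧ y = Fphi φ b}

/-- Indecomposability of a semifinite harmonic function. -/
def IndecSemifinite (φ : Comp → ℝ≥0∞) : Prop :=
  ∀ ψ : Comp → ℝ≥0∞, HarmonicE ψ →
    (((∀ l, ψ l < ⊤) ∧ ψ ≠ 0) ∨ Semifinite ψ) →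
    (∀ a ∈ Kcone, Fphi ψ a ≤ Fphi φ a) →
    ∃ c : ℝ≥0, ∀ l, ψ l = (c : ℝ≥0∞) * φ l

end GK

namespace GK


abbrev Dom (x y : List ℕ) : Prop :=
  List.SublistForall₂ (fun a b : ℕ => 0 < a ∧ a ≤ b) x y

lemma dom_nil_right {x : List ℕ} (h : Dom x []) : x = [] := by cases h; rfl

lemma dom_refl {x : List ℕ} (hx : IsComposition x) : Dom x x := by
  induction x with
  | nil => exact List.SublistForall₂.nil
  | cons a t ih =>
      exact List.SublistForall₂.cons ⟨hx a (by simp), le_refl a⟩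
        (ih fun n hn => hx n (List.mem_cons_of_mem _ hn))

lemma dom_tail {hh : ℕ} {Z : List ℕ} : ∀ {x : List ℕ}, Dom (hh :: Z) x → Dom Z x := by
  intro x h
  induction x with
  | nil => cases h
  | cons b t ih =>
      cases h with
      | cons hr htl => exact htl.cons_right
      | cons_right h' => exact (ih h').cons_right

lemma dom_trans : ∀ {a b c : List ℕ}, Dom a b → Dom b c → Dom a c := by
  intro a b c hab hbc
  induction hbc generalizing a with
  | nil => cases hab; exact List.SublistForall₂.nil
  | cons hr hbc ih =>
      cases hab with
      | nil => exact List.SublistForall₂.nil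
      | cons hr2 h2 => exact List.SublistForall₂.cons ⟨hr2.1, hr2.2.trans hr.2⟩ (ih h2)
      | cons_right h2 => exact (ih h2).cons_right
  | cons_right h ih => exact (ih hab).cons_right

lemma dom_comp {x y : List ℕ} (h : Dom x y) : IsComposition x := by
  induction h with
  | nil => intro n hn; cases hn
  | cons hr htl ih =>
      intro n hn
      rcases List.mem_cons.1 hn with rfl | hn
      · exact hr.1
      · exact ih n hn
  | cons_right h ih => exact ih

lemma dom_length {x y : List ℕ} (h : Dom x y) : x.length ≤ y.length := by
  induction h with
  | nil => simp
  | cons hr htl ih => simpa using Nat.succ_le_succ ih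
  | cons_right h ih => exact ih.trans (Nat.le_succ _)

lemma dom_forall₂ {x y : List ℕ} (h : Dom x y) (hl : y.length ≤ x.length) :
    List.Forall₂ (fun a b : ℕ => 0 < a ∧ a ≤ b) x y := by
  obtain ⟨w, hw, hs⟩ := List.sublistForall₂_iff.1 h
  have hxw : x.length = w.length := hw.length_eq
  have : w = y := hs.eq_of_length (le_antisymm hs.length_le (hl.trans (le_of_eq hxw)))
  exact this ▸ hw

lemma dom_antisymm {x y : List ℕ} (h1 : Dom x y) (h2 : Dom y x) : x = y := by
  have f1 := dom_forall₂ h1 (dom_length h2)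
  have f2 := dom_forall₂ h2 (dom_length h1)
  clear h1 h2
  induction f1 with
  | nil => rfl
  | cons h t ih =>
      cases f2 with
      | cons h' t' => rw [le_antisymm h.2 h'.2, ih t']

lemma dom_of_sublist {x y : List ℕ} (h : x.Sublist y) (hx : IsComposition x) : Dom x y :=
  List.sublistForall₂_iff.2 ⟨x, List.forall₂_same.2 (fun a ha => ⟨hx a ha, le_refl a⟩), h⟩

lemma dom_prepend {x y : List ℕ} (z : List ℕ) (h : Dom x y) : Dom x (z ++ y) := by
  induction z with
  | nil => exact h
  | cons a t ih => exact ih.cons_right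

lemma dom_append {a b a' b' : List ℕ} (h : Dom a b) (h' : Dom a' b') :
    Dom (a ++ a') (b ++ b') := by
  induction h with
  | nil => exact dom_prepend _ h'
  | cons hr htl ih => exact List.SublistForall₂.cons hr ih
  | cons_right h ih => exact ih.cons_right

lemma dom_split : ∀ (A : List ℕ) {l B : List ℕ}, Dom l (A ++ B) →
    ∃ l1 l2, l = l1 ++ l2 ∧ Dom l1 A ∧ Dom l2 B := by
  intro A
  induction A with
  | nil => exact fun {l B} h => ⟨[], l, rfl, List.SublistForall₂.nil, h⟩
  | cons a A' ih =>
      intro l B h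
      cases h with
      | nil => exact ⟨[], [], rfl, List.SublistForall₂.nil, List.SublistForall₂.nil⟩
      | cons hr htl =>
          obtain ⟨l1, l2, rfl, h1, h2⟩ := ih htl
          exact ⟨_ :: l1, l2, rfl, List.SublistForall₂.cons hr h1, h2⟩
      | cons_right h' =>
          obtain ⟨l1, l2, rfl, h1, h2⟩ := ih h'
          exact ⟨l1, l2, rfl, h1.cons_right, h2⟩

lemma dom_single {z : List ℕ} {k : ℕ} (h : Dom z [k]) :
    z = [] ∨ ∃ b, z = [b] ∧ 0 < b ∧ b ≤ k := by
  cases h with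
  | nil => exact Or.inl rfl
  | cons hr htl => exact Or.inr ⟨_, by rw [dom_nil_right htl], hr.1, hr.2⟩
  | cons_right h' => exact Or.inl (dom_nil_right h')

lemma dom_rep_ones : ∀ (n : ℕ) {x : List ℕ}, Dom x (List.replicate n 1) →
    x = List.replicate x.length 1 := by
  intro n
  induction n with
  | zero => intro x h; rw [dom_nil_right h]; rfl
  | succ n ih =>
      intro x h
      rw [List.replicate_succ] at h
      cases h with
      | nil => rfl
      | cons hr htl =>
          have h1 : _ = 1 := le_antisymm hr.2 hr.1
          subst h1
          simp only [List.length_cons, List.replicate_succ, List.cons.injEq, true_and]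
          exact ih htl
      | cons_right h' => exact ih h'

lemma dom_rep_le {a b : ℕ} (h : a ≤ b) : Dom (List.replicate a 1) (List.replicate b 1) :=
  dom_of_sublist ((List.replicate_sublist_replicate 1).2 h) (fun n hn => by
    rw [List.eq_of_mem_replicate hn]; exact one_pos)

lemma dom_drop_ones : ∀ (j : ℕ) {x y : List ℕ}, (x = [] ∨ 2 ≤ x.headD 0) →
    Dom x (List.replicate j 1 ++ y) → Dom x y := by
  intro j
  induction j with
  | zero => exact fun _ h => h
  | succ j ih =>
      intro x y hx h
      rw [List.replicate_succ, List.cons_append] at h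
      cases h with
      | nil => exact List.SublistForall₂.nil
      | cons hr htl =>
          rcases hx with hx | hx
          · cases hx
          · exact absurd hr.2 (by simp only [List.headD_cons] at hx; omega)
      | cons_right h' => exact ih hx h'

lemma rel_iff {ν μ : List ℕ} : Rel ν μ ↔ ∃ p, p < μ.length ∧ stepAt μ p = ν := by
  unfold Rel kappa
  rw [Finset.card_pos]
  constructor
  · rintro ⟨p, hp⟩
    rw [Finset.mem_filter, Finset.mem_range] at hp
    exact ⟨p, hp.1, hp.2⟩
  · rintro ⟨p, hp, hs⟩
    exact ⟨p, Finset.mem_filter.2 ⟨Finset.mem_range.2 hp, hs⟩⟩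

lemma stepAt_cons_succ (h : ℕ) (μ : List ℕ) (p : ℕ) :
    stepAt (h :: μ) (p + 1) = h :: stepAt μ p := by
  unfold stepAt
  simp only [List.getD_cons_succ, List.set_cons_succ, List.eraseIdx_cons_succ]
  split <;> rfl

lemma rel_cons {ν μ : List ℕ} (h : ℕ) (hr : Rel ν μ) : Rel (h :: ν) (h :: μ) := by
  obtain ⟨p, hp, hs⟩ := rel_iff.1 hr
  exact rel_iff.2 ⟨p + 1, by simpa using Nat.succ_lt_succ hp, by rw [stepAt_cons_succ, hs]⟩

lemma rel_head_dec {b : ℕ} (hb : 2 ≤ b) (t : List ℕ) : Rel ((b - 1) :: t) (b :: t) := by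
  refine rel_iff.2 ⟨0, by simp, ?_⟩
  unfold stepAt
  simp [hb]

lemma rel_head_del (t : List ℕ) : Rel t (1 :: t) := by
  refine rel_iff.2 ⟨0, by simp, ?_⟩
  unfold stepAt
  norm_num

lemma rtg_cons {x y : List ℕ} (h : ℕ) (hr : Relation.ReflTransGen Rel x y) :
    Relation.ReflTransGen Rel (h :: x) (h :: y) :=
  Relation.ReflTransGen.lift (h :: ·) (fun _ _ => rel_cons h) _ _ hr

lemma head_up {a : ℕ} (ha : 0 < a) : ∀ {b : ℕ}, a ≤ b → ∀ t,
    Relation.ReflTransGen Rel (a :: t) (b :: t) := by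
  intro b
  induction b with
  | zero => intro h; omega
  | succ b ih =>
      intro h t
      rcases eq_or_lt_of_le h with rfl | hlt
      · exact Relation.ReflTransGen.refl
      · have hab : a ≤ b := by omega
        have : (b + 1) - 1 = b := rfl
        exact (ih hab t).tail (this ▸ rel_head_dec (by omega) t)

lemma rtg_up_cons {b : ℕ} (hb : 0 < b) (t : List ℕ) (ht : IsComposition t) :
    Relation.ReflTransGen Rel t (b :: t) :=
  (Relation.ReflTransGen.single (rel_head_del t)).trans (head_up one_pos hb t)

lemma dom_set_dec : ∀ (μ : List ℕ) (p : ℕ), IsComposition μ → p < μ.length →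
    2 ≤ μ.getD p 0 →
    Dom (μ.set p (μ.getD p 0 - 1)) μ ∧ IsComposition (μ.set p (μ.getD p 0 - 1)) := by
  intro μ
  induction μ with
  | nil => intro p _ hp; simp at hp
  | cons b t ih =>
      intro p hc hp hg
      cases p with
      | zero =>
          simp only [List.getD_cons_zero] at hg ⊢
          have hct : IsComposition t := fun n hn => hc n (List.mem_cons_of_mem _ hn)
          constructor
          · exact List.SublistForall₂.cons ⟨by omega, by omega⟩ (dom_refl hct)
          · intro n hn
            rcases List.mem_cons.1 (by simpa using hn) with rfl | hn
            · omega
            · exact hct n hn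
      | succ p =>
          simp only [List.getD_cons_succ, List.set_cons_succ] at hg ⊢
          have hct : IsComposition t := fun n hn => hc n (List.mem_cons_of_mem _ hn)
          have hb : 0 < b := hc b (by simp)
          obtain ⟨h1, h2⟩ := ih p hct (by simpa using hp) hg
          constructor
          · exact List.SublistForall₂.cons ⟨hb, le_refl b⟩ h1
          · intro n hn
            rcases List.mem_cons.1 hn with rfl | hn
            · exact hb
            · exact h2 n hn

lemma rel_dom {ν μ : List ℕ} (h : Rel ν μ) (hμ : IsComposition μ) :
    Dom ν μ ∧ IsComposition ν := by
  obtain ⟨p, hp, hs⟩ := rel_iff.1 h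
  unfold stepAt at hs
  by_cases hg : 2 ≤ μ.getD p 0
  · rw [if_pos hg] at hs
    obtain ⟨h1, h2⟩ := dom_set_dec μ p hμ hp hg
    exact ⟨hs ▸ h1, hs ▸ h2⟩
  · rw [if_neg hg] at hs
    have hsub := List.eraseIdx_sublist μ p
    have hν : IsComposition ν := fun n hn => hμ n (hsub.subset (hs ▸ hn))
    exact ⟨hs ▸ dom_of_sublist hsub (hs ▸ hν), hν⟩

lemma rtg_to_dom {ν μ : List ℕ} (h : Relation.ReflTransGen Rel ν μ) (hμ : IsComposition μ) :
    Dom ν μ ∧ IsComposition ν := by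
  induction h with
  | refl => exact ⟨dom_refl hμ, hμ⟩
  | tail hr hstep ih =>
      obtain ⟨hd, hc⟩ := rel_dom hstep hμ
      obtain ⟨hd', hc'⟩ := ih hc
      exact ⟨dom_trans hd' hd, hc'⟩

lemma rtg_nil {μ : List ℕ} (hμ : IsComposition μ) : Relation.ReflTransGen Rel [] μ := by
  induction μ with
  | nil => exact Relation.ReflTransGen.refl
  | cons b t ih =>
      have hct : IsComposition t := fun n hn => hμ n (List.mem_cons_of_mem _ hn)
      exact (ih hct).trans (rtg_up_cons (hμ b (by simp)) t hct)

lemma dom_to_rtg {ν μ : List ℕ} (h : Dom ν μ) (hμ : IsComposition μ) :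
    Relation.ReflTransGen Rel ν μ := by
  induction h with
  | nil => exact rtg_nil hμ
  | @cons a b as bs hr htl ih =>
      have hct : IsComposition bs := fun n hn => hμ n (List.mem_cons_of_mem _ hn)
      exact (rtg_cons a (ih hct)).trans (head_up hr.1 hr.2 bs)
  | @cons_right b as bs h ih =>
      have hct : IsComposition bs := fun n hn => hμ n (List.mem_cons_of_mem _ hn)
      exact (ih hct).trans (rtg_up_cons (hμ b (by simp)) bs hct)

inductive Tok where
  | part (k : ℕ)
  | hslot (d : ℕ)
  | vslot
deriving DecidableEq

open Tok

def rtok (n : ℕ) : Tok → List ℕ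
  | part k => [k]
  | hslot _ => [n]
  | vslot => List.replicate n 1

def RR : List Tok → ℕ → List ℕ
  | [], _ => []
  | tok :: T, n => rtok n tok ++ RR T n

def L0 : List Tok → List ℕ
  | [] => []
  | part k :: T => k :: L0 T
  | hslot d :: T => d :: L0 T
  | vslot :: T => L0 T

def lamR : List Tok → List ℕ → List ℕ
  | [], _ => []
  | part k :: T, cs => k :: lamR T cs
  | hslot d :: T, cs => (d + cs.headD 0) :: lamR T cs.tail
  | vslot :: T, cs => List.replicate (cs.headD 0) 1 ++ lamR T cs.tail

def slots : List Tok → ℕ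
  | [] => 0
  | part _ :: T => slots T
  | hslot _ :: T => slots T + 1
  | vslot :: T => slots T + 1

def headIsV : List Tok → Prop
  | vslot :: _ => True
  | _ => False

def headGe2 : List Tok → Prop
  | [] => True
  | part k :: _ => 2 ≤ k
  | hslot d :: _ => 2 ≤ d
  | vslot :: _ => False

def Good : List Tok → Prop
  | [] => True
  | part k :: T => 1 ≤ k ∧ (headIsV T → 2 ≤ k) ∧ Good T
  | hslot d :: T => 1 ≤ d ∧ (headIsV T → 2 ≤ d) ∧ Good T
  | vslot :: T => headGe2 T ∧ Good T

lemma good_tail {A : Tok} {T : List Tok} (h : Good (A :: T)) : Good T := by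
  cases A with
  | part k => exact h.2.2
  | hslot d => exact h.2.2
  | vslot => exact h.2

lemma headGe2_not_headIsV : ∀ {T : List Tok}, headGe2 T → ¬ headIsV T
  | [], _, hv => hv
  | part _ :: _, _, hv => hv
  | hslot _ :: _, _, hv => hv
  | vslot :: _, h, _ => h

lemma good_dropV : ∀ {A : Tok} {T : List Tok}, A ≠ vslot → Good (A :: vslot :: T) →
    Good (A :: T) := by
  rintro (k | d | _) T hA h
  · exact ⟨h.1, fun hv => absurd hv (headGe2_not_headIsV h.2.2.1), h.2.2.2⟩
  · exact ⟨h.1, fun hv => absurd hv (headGe2_not_headIsV h.2.2.1), h.2.2.2⟩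
  · exact absurd rfl hA

lemma compR : ∀ {T : List Tok}, Good T → ∀ {n : ℕ}, 1 ≤ n → IsComposition (RR T n) := by
  intro T
  induction T with
  | nil => intro _ n _ x hx; cases hx
  | cons tok T ih =>
      intro hg n hn x hx
      rcases List.mem_append.1 hx with hx | hx
      · cases tok with
        | part k => rw [List.mem_singleton.1 hx]; exact hg.1
        | hslot d => rw [List.mem_singleton.1 hx]; exact hn
        | vslot => rw [List.eq_of_mem_replicate hx]; exact one_pos
      · exact ih (good_tail hg) hn x hx

lemma compLam : ∀ {T : List Tok}, Good T → ∀ (cs : List ℕ), IsComposition (lamR T cs) := by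
  intro T
  induction T with
  | nil => intro _ cs x hx; cases hx
  | cons tok T ih =>
      intro hg cs x hx
      cases tok with
      | part k =>
          rcases List.mem_cons.1 hx with rfl | hx
          · exact hg.1
          · exact ih (good_tail hg) _ x hx
      | hslot d =>
          rcases List.mem_cons.1 hx with rfl | hx
          · exact lt_of_lt_of_le hg.1 (Nat.le_add_right d _)
          · exact ih (good_tail hg) _ x hx
      | vslot =>
          rcases List.mem_append.1 hx with hx | hx
          · rw [List.eq_of_mem_replicate hx]; exact one_pos
          · exact ih (good_tail hg) _ x hx

lemma RR_mono : ∀ {T : List Tok}, Good T → ∀ {n n' : ℕ}, 1 ≤ n → n ≤ n' →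
    Dom (RR T n) (RR T n') := by
  intro T
  induction T with
  | nil => intro _ n n' _ _; exact List.SublistForall₂.nil
  | cons tok T ih =>
      intro hg n n' hn hnn
      cases tok with
      | part k => exact List.SublistForall₂.cons ⟨hg.1, le_refl k⟩ (ih (good_tail hg) hn hnn)
      | hslot d => exact List.SublistForall₂.cons ⟨hn, hnn⟩ (ih (good_tail hg) hn hnn)
      | vslot => exact dom_append (dom_rep_le hnn) (ih (good_tail hg) hn hnn)

lemma dom_L0_lamR : ∀ {T : List Tok}, Good T → ∀ (cs : List ℕ), Dom (L0 T) (lamR T cs) := by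
  intro T
  induction T with
  | nil => intro _ _; exact List.SublistForall₂.nil
  | cons tok T ih =>
      intro hg cs
      cases tok with
      | part k => exact List.SublistForall₂.cons ⟨hg.1, le_refl k⟩ (ih (good_tail hg) cs)
      | hslot d =>
          exact List.SublistForall₂.cons ⟨hg.1, Nat.le_add_right d _⟩ (ih (good_tail hg) cs.tail)
      | vslot => exact dom_prepend _ (ih (good_tail hg) cs.tail)

lemma fits_lamR : ∀ {T : List Tok}, Good T → ∀ (cs : List ℕ),
    ∃ n, 1 ≤ n ∧ Dom (lamR T cs) (RR T n) := by
  intro T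
  induction T with
  | nil => intro _ _; exact ⟨1, le_refl 1, List.SublistForall₂.nil⟩
  | cons tok T ih =>
      intro hg cs
      cases tok with
      | part k =>
          obtain ⟨n, hn, hd⟩ := ih (good_tail hg) cs
          exact ⟨n, hn, List.SublistForall₂.cons ⟨hg.1, le_refl k⟩ hd⟩
      | hslot d =>
          obtain ⟨n, hn, hd⟩ := ih (good_tail hg) cs.tail
          refine ⟨max n (d + cs.headD 0), le_trans hn (le_max_left _ _), ?_⟩
          exact List.SublistForall₂.cons ⟨lt_of_lt_of_le hg.1 (Nat.le_add_right d _), le_max_right _ _⟩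
            (dom_trans hd (RR_mono (good_tail hg) hn (le_max_left _ _)))
      | vslot =>
          obtain ⟨n, hn, hd⟩ := ih (good_tail hg) cs.tail
          refine ⟨max n (cs.headD 0), le_trans hn (le_max_left _ _), ?_⟩
          exact dom_append (dom_rep_le (le_max_right _ _))
            (dom_trans hd (RR_mono (good_tail hg) hn (le_max_left _ _)))

def Fits (T : List Tok) (x : List ℕ) : Prop := ∃ n, Dom x (RR T n)

lemma L0_head {A : Tok} {T : List Tok} (hA : A ≠ vslot) :
    ∃ a, L0 (A :: T) = a :: L0 T ∧ (Good (A :: T) → 1 ≤ a ∧ (headIsV T → 2 ≤ a)) := by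
  cases A with
  | part k => exact ⟨k, rfl, fun h => ⟨h.1, h.2.1⟩⟩
  | hslot d => exact ⟨d, rfl, fun h => ⟨h.1, h.2.1⟩⟩
  | vslot => exact absurd rfl hA

lemma headGe2_L0 : ∀ {T : List Tok}, headGe2 T → L0 T = [] ∨ 2 ≤ (L0 T).headD 0
  | [], _ => Or.inl rfl
  | Tok.part k :: _, h => Or.inr h
  | Tok.hslot d :: _, h => Or.inr h
  | Tok.vslot :: _, h => h.elim

lemma lemN : ∀ (N : ℕ) (A : Tok) (T' : List Tok), (A :: T').length ≤ N → A ≠ vslot →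
    Good (A :: T') → ∀ x, Dom (L0 (A :: T')) x → Fits T' x → False := by
  intro N
  induction N with
  | zero => intro A T' hlen; simp at hlen
  | succ N ih =>
      intro A T' hlen hA hg x hdom hfit
      obtain ⟨a, hL0, hga⟩ := L0_head (T := T') hA
      rw [hL0] at hdom
      cases T' with
      | nil =>
          obtain ⟨n, hn⟩ := hfit
          rw [show RR [] n = [] from rfl] at hn
          rw [dom_nil_right hn] at hdom
          cases hdom
      | cons B T'' =>
          cases B with
          | part k =>
              obtain ⟨n, hn⟩ := hfit
              rw [show RR (Tok.part k :: T'') n = [k] ++ RR T'' n from rfl] at hn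
              obtain ⟨x1, x2, rfl, hx1, hx2⟩ := dom_split [k] hn
              have hfit2 : Fits T'' x2 := ⟨n, hx2⟩
              have hkey : Dom (L0 (Tok.part k :: T'')) x2 → False := fun h =>
                ih (Tok.part k) T'' (by simpa using Nat.le_of_succ_le_succ hlen)
                  (by simp) (good_tail hg) x2 h hfit2
              rcases dom_single hx1 with rfl | ⟨b, rfl, hb0, hbk⟩
              · exact hkey (dom_tail hdom)
              · cases hdom with
                | cons hr htl => exact hkey htl
                | cons_right h' => exact hkey (dom_tail h')
          | hslot d =>
              obtain ⟨n, hn⟩ := hfit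
              rw [show RR (Tok.hslot d :: T'') n = [n] ++ RR T'' n from rfl] at hn
              obtain ⟨x1, x2, rfl, hx1, hx2⟩ := dom_split [n] hn
              have hfit2 : Fits T'' x2 := ⟨n, hx2⟩
              have hkey : Dom (L0 (Tok.hslot d :: T'')) x2 → False := fun h =>
                ih (Tok.hslot d) T'' (by simpa using Nat.le_of_succ_le_succ hlen)
                  (by simp) (good_tail hg) x2 h hfit2
              rcases dom_single hx1 with rfl | ⟨b, rfl, hb0, hbk⟩
              · exact hkey (dom_tail hdom)
              · cases hdom with
                | cons hr htl => exact hkey htl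
                | cons_right h' => exact hkey (dom_tail h')
          | vslot =>
              obtain ⟨n, hn⟩ := hfit
              rw [show RR (Tok.vslot :: T'') n = List.replicate n 1 ++ RR T'' n from rfl] at hn
              obtain ⟨x1, x2, rfl, hx1, hx2⟩ := dom_split (List.replicate n 1) hn
              have hx1' := dom_rep_ones n hx1
              have ha2 : 2 ≤ a := (hga hg).2 trivial
              have hL0V : L0 (Tok.vslot :: T'') = L0 T'' := rfl
              rw [hL0V] at hdom
              have hdom2 : Dom (a :: L0 T'') x2 := by
                refine dom_drop_ones x1.length (Or.inr (by simp [ha2])) ?_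
                rw [← hx1']
                exact hdom
              have hgood2 : Good (A :: T'') := good_dropV hA (by
                cases A with
                | part k => exact hg
                | hslot d => exact hg
                | vslot => exact absurd rfl hA)
              obtain ⟨a', hL0', hga'⟩ := L0_head (T := T'') hA
              have haa : a' = a := by
                cases A with
                | part k => cases hL0.symm.trans (rfl : L0 (Tok.part k :: Tok.vslot :: T'') = k :: L0 (Tok.vslot :: T'')) ; exact (by cases hL0'; rfl)
                | hslot d => cases hL0.symm.trans (rfl : L0 (Tok.hslot d :: Tok.vslot :: T'') = d :: L0 (Tok.vslot :: T'')) ; exact (by cases hL0'; rfl)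
                | vslot => exact absurd rfl hA
              exact ih A T'' (by simp at hlen ⊢; omega) hA hgood2 x2
                (by rw [hL0', haa]; exact hdom2) ⟨n, hx2⟩

lemma lemMain : ∀ (T : List Tok), Good T → ∀ l, Fits T l → Dom (L0 T) l →
    ∃ cs, l = lamR T cs := by
  intro T
  induction T with
  | nil =>
      intro _ l hfit _
      obtain ⟨n, hn⟩ := hfit
      exact ⟨[], dom_nil_right hn⟩
  | cons tok T' ih =>
      intro hg l hfit hdom
      cases tok with
      | part k =>
          obtain ⟨n, hn⟩ := hfit
          rw [show RR (Tok.part k :: T') n = [k] ++ RR T' n from rfl] at hn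
          obtain ⟨l1, l2, rfl, h1, h2⟩ := dom_split [k] hn
          have hN : Dom (L0 (Tok.part k :: T')) l2 → False := fun h =>
            lemN (Tok.part k :: T').length (Tok.part k) T' le_rfl (by simp) hg l2 h ⟨n, h2⟩
          rcases dom_single h1 with rfl | ⟨b, rfl, hb0, hbk⟩
          · exact absurd hdom hN
          · have hdom' : Dom (k :: L0 T') (b :: l2) := hdom
            cases hdom' with
            | cons hr htl =>
                have hbk' : b = k := le_antisymm hbk hr.2
                obtain ⟨cs, hcs⟩ := ih (good_tail hg) l2 ⟨n, h2⟩ htl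
                exact ⟨cs, by rw [hbk', hcs]; rfl⟩
            | cons_right h' => exact absurd h' hN
      | hslot d =>
          obtain ⟨n, hn⟩ := hfit
          rw [show RR (Tok.hslot d :: T') n = [n] ++ RR T' n from rfl] at hn
          obtain ⟨l1, l2, rfl, h1, h2⟩ := dom_split [n] hn
          have hN : Dom (L0 (Tok.hslot d :: T')) l2 → False := fun h =>
            lemN (Tok.hslot d :: T').length (Tok.hslot d) T' le_rfl (by simp) hg l2 h ⟨n, h2⟩
          rcases dom_single h1 with rfl | ⟨b, rfl, hb0, hbk⟩
          · exact absurd hdom hN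
          · have hdom' : Dom (d :: L0 T') (b :: l2) := hdom
            cases hdom' with
            | cons hr htl =>
                obtain ⟨cs, hcs⟩ := ih (good_tail hg) l2 ⟨n, h2⟩ htl
                refine ⟨(b - d) :: cs, ?_⟩
                have : d + (b - d) = b := by omega
                simp only [lamR, List.headD_cons, List.tail_cons, this, hcs]; rfl
            | cons_right h' => exact absurd h' hN
      | vslot =>
          obtain ⟨n, hn⟩ := hfit
          rw [show RR (Tok.vslot :: T') n = List.replicate n 1 ++ RR T' n from rfl] at hn
          obtain ⟨l1, l2, rfl, h1, h2⟩ := dom_split (List.replicate n 1) hn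
          have hl1 := dom_rep_ones n h1
          have hdom' : Dom (L0 T') l2 := by
            refine dom_drop_ones l1.length (headGe2_L0 hg.1) ?_
            rw [← hl1]
            exact hdom
          obtain ⟨cs, hcs⟩ := ih (good_tail hg) l2 ⟨n, h2⟩ hdom'
          refine ⟨l1.length :: cs, ?_⟩
          simp only [lamR, List.headD_cons, List.tail_cons, ← hcs, ← hl1]

lemma rep_cancel : ∀ (a : ℕ) {b : ℕ} {X Y : List ℕ}, (X = [] ∨ 2 ≤ X.headD 0) →
    (Y = [] ∨ 2 ≤ Y.headD 0) →
    List.replicate a 1 ++ X = List.replicate b 1 ++ Y → a = b ∧ X = Y := by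
  intro a
  induction a with
  | zero =>
      intro b X Y hX hY h
      cases b with
      | zero => exact ⟨rfl, by simpa using h⟩
      | succ b =>
          simp only [List.replicate_zero, List.nil_append, List.replicate_succ,
            List.cons_append] at h
          rcases hX with rfl | hX
          · cases h
          · rw [h] at hX; simp at hX
  | succ a ih =>
      intro b X Y hX hY h
      cases b with
      | zero =>
          simp only [List.replicate_zero, List.nil_append, List.replicate_succ,
            List.cons_append] at h
          rcases hY with rfl | hY
          · cases h
          · rw [← h] at hY; simp at hY
      | succ b =>
          rw [List.replicate_succ, List.replicate_succ, List.cons_append, List.cons_append] at h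
          obtain ⟨ha, hXY⟩ := ih hX hY (List.tail_eq_of_cons_eq h)
          exact ⟨by omega, hXY⟩

lemma lamR_head : ∀ {T : List Tok}, headGe2 T → ∀ (cs : List ℕ),
    lamR T cs = [] ∨ 2 ≤ (lamR T cs).headD 0
  | [], _, _ => Or.inl rfl
  | Tok.part k :: _, h, _ => Or.inr h
  | Tok.hslot d :: _, h, cs => Or.inr (by have h2 : 2 ≤ d := h; simp only [lamR, List.headD_cons]; omega)
  | Tok.vslot :: _, h, _ => h.elim

lemma getD_tail (cs : List ℕ) (i : ℕ) : cs.tail.getD i 0 = cs.getD (i + 1) 0 := by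
  cases cs <;> simp [List.getD]

lemma getD_zero (cs : List ℕ) : cs.getD 0 0 = cs.headD 0 := by
  cases cs <;> rfl

lemma lamR_inj : ∀ {T : List Tok}, Good T → ∀ (cs cs' : List ℕ),
    lamR T cs = lamR T cs' → ∀ i, i < slots T → cs.getD i 0 = cs'.getD i 0 := by
  intro T
  induction T with
  | nil => intro _ _ _ _ i hi; simp [slots] at hi
  | cons tok T' ih =>
      intro hg cs cs' h i hi
      cases tok with
      | part k =>
          exact ih (good_tail hg) cs cs' (List.tail_eq_of_cons_eq h) i hi
      | hslot d =>
          have hhd : cs.headD 0 = cs'.headD 0 := by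
            have := List.head_eq_of_cons_eq h
            omega
          cases i with
          | zero => rw [getD_zero, getD_zero, hhd]
          | succ i =>
              rw [← getD_tail, ← getD_tail]
              exact ih (good_tail hg) cs.tail cs'.tail (List.tail_eq_of_cons_eq h) i
                (Nat.lt_of_succ_lt_succ hi)
      | vslot =>
          have hok := hg.1
          obtain ⟨hhd, htail⟩ := rep_cancel (cs.headD 0) (lamR_head hok cs.tail)
            (lamR_head hok cs'.tail) h
          cases i with
          | zero => rw [getD_zero, getD_zero, hhd]
          | succ i =>
              rw [← getD_tail, ← getD_tail]
              exact ih (good_tail hg) cs.tail cs'.tail htail i (Nat.lt_of_succ_lt_succ hi)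

lemma lamR_congr : ∀ (T : List Tok) (cs cs' : List ℕ),
    (∀ i, i < slots T → cs.getD i 0 = cs'.getD i 0) → lamR T cs = lamR T cs' := by
  intro T
  induction T with
  | nil => intro _ _ _; rfl
  | cons tok T' ih =>
      intro cs cs' h
      cases tok with
      | part k => simp only [lamR, ih cs cs' h]
      | hslot d =>
          have h0 : cs.headD 0 = cs'.headD 0 := by
            rw [← getD_zero, ← getD_zero]; exact h 0 (Nat.succ_pos _)
          have ht : lamR T' cs.tail = lamR T' cs'.tail := by
            refine ih _ _ fun i hi => ?_
            rw [getD_tail, getD_tail]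
            exact h (i + 1) (Nat.succ_lt_succ hi)
          simp only [lamR, h0, ht]
      | vslot =>
          have h0 : cs.headD 0 = cs'.headD 0 := by
            rw [← getD_zero, ← getD_zero]; exact h 0 (Nat.succ_pos _)
          have ht : lamR T' cs.tail = lamR T' cs'.tail := by
            refine ih _ _ fun i hi => ?_
            rw [getD_tail, getD_tail]
            exact h (i + 1) (Nat.succ_lt_succ hi)
          simp only [lamR, h0, ht]

def toksAux (t : ℕ → Bool) (e : ℕ → ℕ) (sp : ℕ → List ℕ) (m : ℕ) : List Tok :=
  (List.ofFn fun i : Fin m =>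
    (if t i then Tok.hslot (e i) else Tok.vslot) :: (sp i).map Tok.part).flatten

def tokensU (u : UTilde) : List Tok :=
  (u.sep 0).map Tok.part ++ toksAux u.t u.d (fun i => u.sep (i + 1)) u.m

lemma toksAux_succ (t : ℕ → Bool) (e : ℕ → ℕ) (sp : ℕ → List ℕ) (m : ℕ) :
    toksAux t e sp (m + 1) =
      ((if t 0 then Tok.hslot (e 0) else Tok.vslot) :: (sp 0).map Tok.part) ++
        toksAux (fun i => t (i + 1)) (fun i => e (i + 1)) (fun i => sp (i + 1)) m := by
  simp [toksAux, List.ofFn_succ]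
  rfl

lemma RR_append (T1 T2 : List Tok) (n : ℕ) : RR (T1 ++ T2) n = RR T1 n ++ RR T2 n := by
  induction T1 with
  | nil => rfl
  | cons tok T ih => simp [RR, ih]

lemma RR_mapPart (s : List ℕ) (n : ℕ) : RR (s.map Tok.part) n = s := by
  induction s with
  | nil => rfl
  | cons a s ih => simp [RR, rtok, ih]

lemma lamR_mapPart_append (s : List ℕ) (Y : List Tok) (cs : List ℕ) :
    lamR (s.map Tok.part ++ Y) cs = s ++ lamR Y cs := by
  induction s with
  | nil => rfl
  | cons a s ih => simp [lamR, ih]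

lemma slots_mapPart_append (s : List ℕ) (Y : List Tok) :
    slots (s.map Tok.part ++ Y) = slots Y := by
  induction s with
  | nil => rfl
  | cons a s ih => simpa [slots] using ih

lemma slotsAux (t : ℕ → Bool) (e : ℕ → ℕ) (sp : ℕ → List ℕ) :
    ∀ m, slots (toksAux t e sp m) = m := by
  intro m
  induction m generalizing t e sp with
  | zero => rfl
  | succ m ih =>
      rw [toksAux_succ]
      by_cases ht : t 0
      · rw [if_pos ht]
        show slots (Tok.hslot (e 0) :: ((sp 0).map Tok.part ++ _)) = m + 1
        simp [slots, slots_mapPart_append, ih]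
      · rw [if_neg ht]
        show slots (Tok.vslot :: ((sp 0).map Tok.part ++ _)) = m + 1
        simp [slots, slots_mapPart_append, ih]

lemma RAux (n : ℕ) : ∀ (m : ℕ) (t : ℕ → Bool) (e : ℕ → ℕ) (sp : ℕ → List ℕ),
    RR (toksAux t e sp m) n =
      (List.ofFn fun i : Fin m =>
        (if t i then [n] else List.replicate n 1) ++ sp i).flatten := by
  intro m
  induction m with
  | zero => intro t e sp; rfl
  | succ m ih =>
      intro t e sp
      rw [toksAux_succ, RR_append, ih]
      simp only [List.ofFn_succ, List.flatten_cons, Fin.val_succ, Fin.val_zero]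
      congr 1
      by_cases ht : t 0
      · rw [if_pos ht]; simp only [ht, ↓reduceIte]
        show [n] ++ RR ((sp 0).map Tok.part) n = [n] ++ sp 0
        rw [RR_mapPart]
      · rw [if_neg ht]; simp only [ht, ↓reduceIte, Bool.false_eq_true]
        show List.replicate n 1 ++ RR ((sp 0).map Tok.part) n = List.replicate n 1 ++ sp 0
        rw [RR_mapPart]

lemma lamAux : ∀ (m : ℕ) (t : ℕ → Bool) (e : ℕ → ℕ) (sp : ℕ → List ℕ) (c : ℕ → ℕ),
    lamR (toksAux t e sp m) ((List.range m).map c) =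
      (List.ofFn fun i : Fin m =>
        (if t i then [e i + c i] else List.replicate (c i) 1) ++ sp i).flatten := by
  intro m
  induction m with
  | zero => intro t e sp c; rfl
  | succ m ih =>
      intro t e sp c
      rw [toksAux_succ, List.range_succ_eq_map, List.map_cons, List.map_map]
      simp only [List.ofFn_succ, List.flatten_cons, Fin.val_succ, Fin.val_zero]
      by_cases ht : t 0
      · rw [if_pos ht, List.cons_append]
        show (e 0 + c 0) :: lamR ((sp 0).map Tok.part ++ _) ((List.range m).map (c ∘ Nat.succ)) = _
        rw [lamR_mapPart_append, ih]; simp only [ht, ↓reduceIte]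
        simp [Function.comp_def]
      · rw [if_neg ht, List.cons_append]
        show List.replicate (c 0) 1 ++ lamR ((sp 0).map Tok.part ++ _)
            ((List.range m).map (c ∘ Nat.succ)) = _
        rw [lamR_mapPart_append, ih]; simp only [ht, ↓reduceIte, Bool.false_eq_true]
        simp [Function.comp_def]

lemma headIsV_mapPart_cons (a : ℕ) (s : List ℕ) (X : List Tok)
    (h : headIsV ((a :: s).map Tok.part ++ X)) : False := by
  simp only [List.map_cons, List.cons_append] at h
  simp [headIsV] at h

lemma getLastD_irrel : ∀ (l : List ℕ), l ≠ [] → ∀ d d' : ℕ, l.getLastD d = l.getLastD d' := by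
  intro l h d d'
  cases l with
  | nil => exact absurd rfl h
  | cons a t => rw [List.getLastD_cons, List.getLastD_cons]

lemma good_mapPart : ∀ (s : List ℕ) (X : List Tok), (∀ a ∈ s, 0 < a) → Good X →
    (headIsV X → s ≠ [] → 2 ≤ s.getLastD 0) → Good (s.map Tok.part ++ X) := by
  intro s
  induction s with
  | nil => intro X _ hX _; exact hX
  | cons a s ih =>
      intro X hs hX hlast
      show Good (Tok.part a :: (s.map Tok.part ++ X))
      refine ⟨hs a (by simp), ?_, ?_⟩
      · intro hv
        cases s with
        | nil =>
            simp only [List.map_nil, List.nil_append] at hv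
            simpa using hlast hv (by simp)
        | cons b s' => exact absurd hv (fun h => headIsV_mapPart_cons b s' X h)
      · refine ih X (fun x hx => hs x (by simp [hx])) hX ?_
        intro hv hne
        have h2 := hlast hv (by simp)
        cases s with
        | nil => exact absurd rfl hne
        | cons b s' =>
            rw [List.getLastD_cons] at h2
            rwa [getLastD_irrel (b :: s') (by simp) a 0] at h2

lemma toksAux_headIsV {t : ℕ → Bool} {e : ℕ → ℕ} {sp : ℕ → List ℕ} {m : ℕ}
    (h : headIsV (toksAux t e sp m)) : 0 < m ∧ t 0 = false := by
  cases m with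
  | zero => simp [toksAux, headIsV] at h
  | succ m =>
      rw [toksAux_succ] at h
      by_cases ht : t 0
      · rw [if_pos ht] at h; simp [headIsV] at h
      · exact ⟨Nat.succ_pos m, by simpa using ht⟩

lemma good_toksAux : ∀ (m : ℕ) (t : ℕ → Bool) (e : ℕ → ℕ) (sp : ℕ → List ℕ),
    (∀ i, i < m → 1 ≤ e i) →
    (∀ i, i < m → ∀ a ∈ sp i, 0 < a) →
    (∀ i, i + 1 < m → t i = false → t (i + 1) = false → sp i ≠ []) →
    (∀ i, i + 1 < m → t (i + 1) = false → sp i ≠ [] → 2 ≤ (sp i).getLastD 0) →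
    (∀ i, i < m → t i = false → sp i ≠ [] → 2 ≤ (sp i).headD 0) →
    (∀ i, i + 1 < m → t i = true → t (i + 1) = false → sp i = [] → 2 ≤ e i) →
    (∀ i, i + 1 < m → t i = false → t (i + 1) = true → sp i = [] → 2 ≤ e (i + 1)) →
    Good (toksAux t e sp m) := by
  intro m
  induction m with
  | zero => intro t e sp _ _ _ _ _ _ _; exact trivial
  | succ m ih =>
      intro t e sp h1 h2 h3 h4 h5 h6 h7
      rw [toksAux_succ]
      have hgrest : Good (toksAux (fun i => t (i + 1)) (fun i => e (i + 1))
          (fun i => sp (i + 1)) m) := by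
        refine ih _ _ _ (fun i hi => h1 (i + 1) (by omega))
          (fun i hi => h2 (i + 1) (by omega))
          (fun i hi => h3 (i + 1) (by omega))
          (fun i hi => h4 (i + 1) (by omega))
          (fun i hi => h5 (i + 1) (by omega))
          (fun i hi => h6 (i + 1) (by omega))
          (fun i hi => h7 (i + 1) (by omega))
      have hgood_tail : Good ((sp 0).map Tok.part ++ toksAux (fun i => t (i + 1))
          (fun i => e (i + 1)) (fun i => sp (i + 1)) m) := by
        refine good_mapPart _ _ (h2 0 (by omega)) hgrest ?_
        intro hv hne
        obtain ⟨hm, ht1⟩ := toksAux_headIsV hv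
        exact h4 0 (by omega) ht1 hne
      by_cases ht0 : t 0
      · rw [if_pos ht0]
        refine ⟨h1 0 (by omega), ?_, hgood_tail⟩
        intro hv
        rcases hsp : sp 0 with _ | ⟨a, s⟩
        · rw [hsp] at hv
          simp only [List.map_nil, List.nil_append] at hv
          obtain ⟨hm, ht1⟩ := toksAux_headIsV hv
          exact h6 0 (by omega) ht0 ht1 hsp
        · rw [hsp] at hv
          exact absurd hv (fun h => headIsV_mapPart_cons a s _ h)
      · rw [if_neg ht0]
        refine ⟨?_, hgood_tail⟩
        rcases hsp : sp 0 with _ | ⟨a, s⟩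
        · cases m with
          | zero => exact trivial
          | succ m' =>
              simp only [List.map_nil, List.nil_append, toksAux_succ]
              by_cases ht1 : t 1
              · rw [if_pos ht1]
                exact h7 0 (by omega) (by simpa using ht0) ht1 hsp
              · exact absurd hsp
                  (h3 0 (by omega) (by simpa using ht0) (by simpa using ht1))
        · simp only [List.map_cons, List.cons_append]
          show 2 ≤ a
          have hh := h5 0 (by omega) (by simpa using ht0) (by rw [hsp]; simp)
          rw [hsp] at hh
          simpa using hh

lemma good_tokensU (u : UTilde) : Good (tokensU u) := by
  have hd1 : ∀ i, 1 ≤ u.d i := by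
    intro i; unfold UTilde.d; split <;> omega
  have hgaux : Good (toksAux u.t u.d (fun i => u.sep (i + 1)) u.m) := by
    refine good_toksAux _ _ _ _ (fun i _ => hd1 i)
      (fun i hi a ha => u.sep_pos (i + 1) (by omega) a ha)
      (fun i hi h1 h2 => u.vv i hi h1 h2)
      (fun i hi h1 h2 => u.v_left (i + 1) (by omega) h1 h2)
      (fun i hi h1 h2 => u.v_right i hi h1 h2)
      ?_ ?_
    · intro i hi hti ht1 hsp
      have hadj : u.adj i := Or.inr ⟨hi, ht1, hsp⟩
      unfold UTilde.d
      rw [if_pos hadj]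
    · intro i hi hti ht1 hsp
      have hadj : u.adj (i + 1) := Or.inl ⟨Nat.succ_pos i, by simpa using hti, hsp⟩
      unfold UTilde.d
      rw [if_pos hadj]
  refine good_mapPart _ _ (u.sep_pos 0 (Nat.zero_le _)) hgaux ?_
  intro hv hne
  obtain ⟨hm, ht0⟩ := toksAux_headIsV hv
  exact u.v_left 0 hm ht0 hne

lemma lamR_zero : ∀ (T : List Tok) (cs : List ℕ), (∀ x ∈ cs, x = 0) → lamR T cs = L0 T := by
  intro T
  induction T with
  | nil => intro _ _; rfl
  | cons tok T ih =>
      intro cs hcs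
      have htail : ∀ x ∈ cs.tail, x = 0 := fun x hx => hcs x (List.mem_of_mem_tail hx)
      have hhd : cs.headD 0 = 0 := by
        cases cs with
        | nil => rfl
        | cons a t => exact hcs a (by simp)
      cases tok with
      | part k => simp only [lamR, L0, ih cs hcs]
      | hslot d => simp only [lamR, L0, ih cs.tail htail, hhd, Nat.add_zero]
      | vslot => simp only [lamR, L0, ih cs.tail htail, hhd, List.replicate_zero,
          List.nil_append]

lemma tn_eq (u : UTilde) (n : ℕ) : u.tn n = RR (tokensU u) n := by
  unfold UTilde.tn UTilde.blocks tokensU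
  rw [RR_append, RR_mapPart, RAux]

lemma lam_eq (u : UTilde) (c : ℕ → ℕ) :
    u.lam c = lamR (tokensU u) ((List.range u.m).map c) := by
  unfold UTilde.lam UTilde.blocks tokensU
  rw [lamR_mapPart_append, lamAux]

lemma slots_eq (u : UTilde) : slots (tokensU u) = u.m := by
  unfold tokensU
  rw [slots_mapPart_append, slotsAux]

lemma L0_tokensU (u : UTilde) : L0 (tokensU u) = u.lam0 := by
  have h1 : u.lam0 = u.lam (fun _ => 0) := rfl
  rw [h1, lam_eq, lamR_zero]
  intro x hx
  simp at hx
  exact hx.2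

lemma getD_map_range (c : ℕ → ℕ) (m i : ℕ) (h : i < m) :
    ((List.range m).map c).getD i 0 = c i := by
  rw [List.getD_eq_getElem?_getD, List.getElem?_map, List.getElem?_range h]
  rfl

/-- `(a,b) ↦ λ(a,b)` is injective, with image `{λ ∈ GK_ũ : λ ≥ λ_ũ}`. -/
theorem lam_injective_image (u : UTilde) :
    (∀ c c' : ℕ → ℕ, (∀ i, u.m ≤ i → c i = 0) → (∀ i, u.m ≤ i → c' i = 0) →
      u.lam c = u.lam c' → c = c') ∧
    (∀ l : List ℕ,
      (∃ c : ℕ → ℕ, (∀ i, u.m ≤ i → c i = 0) ∧ l = u.lam c) ↔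
        (u.GKmem l ∧ Relation.ReflTransGen Rel u.lam0 l)) := by
  have hg := good_tokensU u
  constructor
  · intro c c' hc hc' h
    rw [lam_eq, lam_eq] at h
    funext i
    by_cases hi : i < u.m
    · have hh := lamR_inj hg _ _ h i (by rw [slots_eq]; exact hi)
      rwa [getD_map_range c u.m i hi, getD_map_range c' u.m i hi] at hh
    · rw [hc i (by omega), hc' i (by omega)]
  · intro l
    constructor
    · rintro ⟨c, hc, rfl⟩
      have hcomp : IsComposition (u.lam c) := by
        rw [lam_eq]; exact compLam hg _
      constructor
      · obtain ⟨n, hn, hd⟩ := fits_lamR hg ((List.range u.m).map c)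
        refine ⟨n, hn, ?_⟩
        rw [lam_eq, tn_eq]
        exact dom_to_rtg hd (compR hg hn)
      · have hd := dom_L0_lamR hg ((List.range u.m).map c)
        rw [L0_tokensU, ← lam_eq] at hd
        exact dom_to_rtg hd hcomp
    · rintro ⟨⟨n, hn, hrtg⟩, hRT⟩
      have hcompTn : IsComposition (u.tn n) := by rw [tn_eq]; exact compR hg hn
      obtain ⟨hdom, hcompl⟩ := rtg_to_dom hrtg hcompTn
      rw [tn_eq] at hdom
      have hdom0 : Dom (L0 (tokensU u)) l := by
        rw [L0_tokensU]
        exact (rtg_to_dom hRT hcompl).1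
      obtain ⟨cs, hlcs⟩ := lemMain _ hg l ⟨n, hdom⟩ hdom0
      refine ⟨fun i => if i < u.m then cs.getD i 0 else 0, fun i hi => by
        simp [Nat.not_lt.2 hi], ?_⟩
      rw [lam_eq, hlcs]
      apply lamR_congr
      intro i hi
      rw [slots_eq] at hi
      rw [getD_map_range _ _ _ hi]
      simp [hi]

end GK
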